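/- Let Z : 𝕂 × 𝕂 → A_X be a differentiable cotranslation with infinitesimal generator A(u) := ∂₂Z(u, 0), and define Ψ(u, v) := Z(v, u − v). Then: (i) Ψ(u, v) ∘ Ψ(v, w) = Ψ(u, w) for all u, v, w; (ii) ∂_u Ψ(u, v) = A(u) ∘ Ψ(u, v); (iii) ∂_v Ψ(u, v) = −Ψ(u, v) ∘ A(v); and (iv) for every ξ ∈ X, the map u ↦ Ψ(u, v)(ξ) solves the differential equation x'(u) = A(u) x(u) with x(v) = ξ. -/

import Mathlib

private lemma inv_hasDerivAt {𝕂 X : Type*} [RCLike 𝕂] [NormedAddCommGroup X]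
    [NormedSpace 𝕂 X] {h i : 𝕂 → (X →L[𝕂] X)} {B : X →L[𝕂] X} {v : 𝕂}
    (hmul : ∀ t, i t * h t = 1) (hmul' : ∀ t, h t * i t = 1)
    (hv : h v = 1) (hd : HasDerivAt h B v) :
    HasDerivAt i (-B) v := by
  have hiv : i v = 1 := by
    have := hmul' v; rw [hv, one_mul] at this; exact this
  have hdo := hasDerivAt_iff_isLittleO.mp hd
  rw [hv] at hdo
  -- identity : i t * (h t - 1) = 1 - i t
  have key : ∀ t, i t * (h t - 1) = 1 - i t := by
    intro t; rw [mul_sub, hmul t, mul_one]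
  -- local bound on i
  have hcont : Filter.Tendsto h (nhds v) (nhds 1) := hv ▸ hd.continuousAt.tendsto
  have hsmall : ∀ᶠ t in nhds v, ‖h t - 1‖ ≤ 1/2 := by
    have := hcont.sub_const 1
    rw [sub_self] at this
    have hn := this.norm
    rw [norm_zero] at hn
    exact hn.eventually_le_const (by norm_num)
  have hibound : ∀ᶠ t in nhds v, ‖i t‖ ≤ 2 * ‖(1 : X →L[𝕂] X)‖ := by
    filter_upwards [hsmall] with t ht
    have h1 : i t = 1 - i t * (h t - 1) := by rw [key t]; abel
    have h2 : ‖i t‖ ≤ ‖(1 : X →L[𝕂] X)‖ + ‖i t‖ * (1/2) := by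
      calc ‖i t‖ = ‖1 - i t * (h t - 1)‖ := by rw [← h1]
        _ ≤ ‖(1 : X →L[𝕂] X)‖ + ‖i t * (h t - 1)‖ := norm_sub_le _ _
        _ ≤ ‖(1 : X →L[𝕂] X)‖ + ‖i t‖ * ‖h t - 1‖ := by
            gcongr; exact norm_mul_le _ _
        _ ≤ ‖(1 : X →L[𝕂] X)‖ + ‖i t‖ * (1/2) := by gcongr
    linarith
  have hiO : (fun t => i t) =O[nhds v] (fun _ => (1:𝕂)) := by
    rw [Asymptotics.isBigO_iff]
    exact ⟨2 * ‖(1 : X →L[𝕂] X)‖, by filter_upwards [hibound] with t ht; simpa using ht⟩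
  have h1O : (fun t => h t - 1) =O[nhds v] (fun t => t - v) := by
    have := hd.isBigO_sub
    simpa [hv] using this
  -- term 1
  have term1 : (fun t => -(i t * (h t - 1 - (t - v) • B))) =o[nhds v] (fun t => t - v) := by
    have := hiO.mul_isLittleO hdo
    simpa using this.neg_left
  -- term 2
  have honei : (fun t => 1 - i t) =O[nhds v] (fun t => t - v) := by
    have := hiO.mul h1O
    simp only [one_mul] at this
    refine this.congr' ?_ (by rfl)
    filter_upwards with t using (key t)
  have hsB : (fun t : 𝕂 => (t - v) • B) =O[nhds v] (fun t => t - v) := by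
    rw [Asymptotics.isBigO_iff]
    refine ⟨‖B‖, ?_⟩
    filter_upwards with t
    rw [norm_smul (t - v) B, mul_comm]
  have hsq : (fun t : 𝕂 => (t - v) * (t - v)) =o[nhds v] (fun t => t - v) := by
    have h0 : (fun t : 𝕂 => t - v) =o[nhds v] (fun _ => (1:𝕂)) := by
      rw [Asymptotics.isLittleO_one_iff]
      have : Filter.Tendsto (fun t : 𝕂 => t - v) (nhds v) (nhds (v - v)) :=
        (continuous_id.sub continuous_const).tendsto v
      simpa using this
    have := h0.mul_isBigO (Asymptotics.isBigO_refl (fun t : 𝕂 => t - v) (nhds v))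
    simpa using this
  have term2 : (fun t => (1 - i t) * ((t - v) • B)) =o[nhds v] (fun t => t - v) :=
    (honei.mul hsB).trans_isLittleO hsq
  rw [hasDerivAt_iff_isLittleO, hiv]
  have heq : (fun t => i t - 1 - (t - v) • (-B)) =
      fun t => -(i t * (h t - 1 - (t - v) • B)) + (1 - i t) * ((t - v) • B) := by
    funext t
    simp only [mul_sub, sub_mul, one_mul, mul_one, hmul t, smul_neg]
    abel
  rw [heq]
  exact term1.add term2


/-- Properties of the evolution operator `Ψ(u,v) := Z(v, u − v)` of a differentiable
cotranslation `Z` with infinitesimal generator `A(u) := ∂₂Z(u,0)`. -/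
theorem stmt_12 {𝕂 X : Type*} [RCLike 𝕂] [NormedAddCommGroup X] [NormedSpace 𝕂 X]
    (Z : 𝕂 → 𝕂 → (X ≃L[𝕂] X))
    (hZ : ∀ r s t : 𝕂, Z r (t + s) = Z (s + r) t * Z r s)
    (D : 𝕂 → 𝕂 → (X →L[𝕂] X))
    (hD : ∀ r t : 𝕂, HasDerivAt (fun s => ((Z r s : X →L[𝕂] X))) (D r t) t)
    (A : 𝕂 → (X →L[𝕂] X)) (hA : ∀ u : 𝕂, A u = D u 0)
    (Ψ : 𝕂 → 𝕂 → (X ≃L[𝕂] X)) (hΨ : ∀ u v : 𝕂, Ψ u v = Z v (u - v)) :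
    (∀ u v w : 𝕂, Ψ u v * Ψ v w = Ψ u w) ∧
    (∀ u v : 𝕂, HasDerivAt (fun u' => ((Ψ u' v : X →L[𝕂] X)))
      ((A u).comp ((Ψ u v : X →L[𝕂] X))) u) ∧
    (∀ u v : 𝕂, HasDerivAt (fun v' => ((Ψ u v' : X →L[𝕂] X)))
      (-(((Ψ u v : X →L[𝕂] X)).comp (A v))) v) ∧
    (∀ (v : 𝕂) (ξ : X), (Ψ v v) ξ = ξ ∧
      ∀ u : 𝕂, HasDerivAt (fun u' => (Ψ u' v) ξ) ((A u) ((Ψ u v) ξ)) u) := by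
  -- cocycle property
  have hcoc : ∀ u v w : 𝕂, Ψ u v * Ψ v w = Ψ u w := by
    intro u v w
    have h := hZ w (v - w) (u - v)
    rw [hΨ, hΨ, hΨ]
    have e1 : u - v + (v - w) = u - w := by ring
    have e2 : v - w + w = v := by ring
    rw [e1, e2] at h
    exact h.symm
  -- Ψ v v = 1
  have hone : ∀ v : 𝕂, Ψ v v = 1 := fun v => mul_eq_left.mp (hcoc v v v)
  -- key: D r s = A (s + r) ∘ Z r s
  have hkey : ∀ r s : 𝕂, D r s = (A (s + r)).comp (Z r s : X →L[𝕂] X) := by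
    intro r s
    have hpt : HasDerivAt (fun s' => ((Z r s' : X →L[𝕂] X))) (D r s) (id (0:𝕂) + s) := by
      simpa using hD r s
    have h1 : HasDerivAt (fun t : 𝕂 => ((Z r (t + s) : X →L[𝕂] X))) (D r s) 0 := by
      have := hpt.scomp (0:𝕂) ((hasDerivAt_id (0:𝕂)).add_const s)
      simpa [Function.comp_def] using this
    have h2 : HasDerivAt (fun t : 𝕂 => ((Z r (t + s) : X →L[𝕂] X)))
        ((A (s + r)).comp (Z r s : X →L[𝕂] X)) 0 := by
      have hc : HasDerivAt (fun t : 𝕂 => ((Z (s + r) t : X →L[𝕂] X)).comp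
          ((Z r s : X →L[𝕂] X))) ((D (s + r) 0).comp (Z r s : X →L[𝕂] X)) 0 := by
        have := (hD (s + r) 0).clm_comp (hasDerivAt_const (0:𝕂) ((Z r s : X →L[𝕂] X)))
        simpa using this
      rw [hA]
      refine hc.congr_of_eventuallyEq ?_
      filter_upwards with t
      rw [hZ r s t]
      rfl
    exact h1.unique h2
  -- part (ii)
  have hii : ∀ u v : 𝕂, HasDerivAt (fun u' => ((Ψ u' v : X →L[𝕂] X)))
      ((A u).comp ((Ψ u v : X →L[𝕂] X))) u := by
    intro u v
    have hpt : HasDerivAt (fun s' => ((Z v s' : X →L[𝕂] X))) (D v (u - v)) (id u - v) := by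
      simpa using hD v (u - v)
    have h1 : HasDerivAt (fun u' : 𝕂 => ((Z v (u' - v) : X →L[𝕂] X))) (D v (u - v)) u := by
      have := hpt.scomp u ((hasDerivAt_id u).sub_const v)
      simpa [Function.comp_def] using this
    have h2 : D v (u - v) = (A u).comp ((Ψ u v : X →L[𝕂] X)) := by
      rw [hkey v (u - v), hΨ]
      congr 1
      ring_nf
    rw [h2] at h1
    refine h1.congr_of_eventuallyEq ?_
    filter_upwards with u'
    rw [hΨ]
  -- part (iii)
  have hiii : ∀ u v : 𝕂, HasDerivAt (fun v' => ((Ψ u v' : X →L[𝕂] X)))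
      (-(((Ψ u v : X →L[𝕂] X)).comp (A v))) v := by
    intro u v
    set h : 𝕂 → (X →L[𝕂] X) := fun v' => ((Ψ v' v : X →L[𝕂] X)) with hh
    set i : 𝕂 → (X →L[𝕂] X) := fun v' => (((Ψ v' v).symm : X →L[𝕂] X)) with hi
    have hmul : ∀ t, i t * h t = 1 := by
      intro t; ext x
      simp [hi, hh, ContinuousLinearMap.mul_apply]
    have hmul' : ∀ t, h t * i t = 1 := by
      intro t; ext x
      simp [hi, hh, ContinuousLinearMap.mul_apply]
    have hv1 : h v = 1 := by
      rw [hh]; simp only [hone v]; rfl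
    have hd : HasDerivAt h (A v) v := by
      have := hii v v
      rw [hone v] at this
      exact this.congr_deriv (by ext x; rfl)
    have hinv : HasDerivAt i (-(A v)) v := inv_hasDerivAt hmul hmul' hv1 hd
    have hcomp : HasDerivAt (fun v' => ((Ψ u v : X →L[𝕂] X)).comp (i v'))
        (((Ψ u v : X →L[𝕂] X)).comp (-(A v))) v := by
      have := (hasDerivAt_const v ((Ψ u v : X →L[𝕂] X))).clm_comp hinv
      simpa using this
    have heq : ∀ v' : 𝕂, ((Ψ u v : X →L[𝕂] X)).comp (i v') = ((Ψ u v' : X →L[𝕂] X)) := by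
      intro v'
      have h1 : Ψ u v' = Ψ u v * (Ψ v' v)⁻¹ := by
        rw [← hcoc u v' v, mul_assoc, mul_inv_cancel, mul_one]
      rw [h1]
      rfl
    have hfinal : HasDerivAt (fun v' => ((Ψ u v' : X →L[𝕂] X)))
        (((Ψ u v : X →L[𝕂] X)).comp (-(A v))) v := by
      refine hcomp.congr_of_eventuallyEq ?_
      filter_upwards with v'
      exact (heq v').symm
    have hne : ((Ψ u v : X →L[𝕂] X)).comp (-(A v))
        = -(((Ψ u v : X →L[𝕂] X)).comp (A v)) := by
      ext x; simp
    rwa [hne] at hfinal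
  refine ⟨hcoc, hii, hiii, ?_⟩
  intro v ξ
  constructor
  · rw [hone v]; rfl
  · intro u
    have := (hii u v).clm_apply (hasDerivAt_const u ξ)
    simpa using this
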